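/- Let z, z' ∈ ℂ with |z|² < R and |z'|² < R. Then the ℓ² inner product of the corresponding q-coherent states is ⟨c_{z'}, c_z⟩ = (e_q(|z'|²) e_q(|z|²))^{-1/2} · e_q(conj(z') z) (note |conj(z') z| < R so the right-hand side is defined). In particular ⟨c_z, c_z⟩ = 1, i.e. each q-coherent state is normalized. -/

import Mathlib

open scoped BigOperators

/-- The q-number `[n]_q = (1 - q^n)/(1 - q)`. -/
noncomputable def qnum (q : ℝ) (n : ℕ) : ℝ := (1 - q ^ n) / (1 - q)

/-- The q-factorial `[n]_q! = [1]_q [2]_q ⋯ [n]_q`, with `[0]_q! = 1`. -/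
noncomputable def qfact (q : ℝ) : ℕ → ℝ
  | 0 => 1
  | n + 1 => qfact q n * qnum q (n + 1)

/-- The complex q-exponential `e_q(w) = ∑ w^n/[n]_q!`. -/
noncomputable def qexC (q : ℝ) (w : ℂ) : ℂ := ∑' n : ℕ, w ^ n / (qfact q n : ℂ)

/-- The real q-exponential `e_q(x) = ∑ x^n/[n]_q!`. -/
noncomputable def qexR (q : ℝ) (x : ℝ) : ℝ := ∑' n : ℕ, x ^ n / qfact q n

/-- The normalized q-coherent state `c_z(n) = e_q(|z|²)^{-1/2} z^n / √([n]_q!)`. -/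
noncomputable def coh (q : ℝ) (z : ℂ) (n : ℕ) : ℂ :=
  (((Real.sqrt (qexR q (‖z‖ ^ 2)))⁻¹ : ℝ) : ℂ) * z ^ n / ((Real.sqrt (qfact q n) : ℝ) : ℂ)

lemma qnum_pos (q : ℝ) (hq0 : 0 < q) (hq1 : q < 1) (n : ℕ) : 0 < qnum q (n + 1) := by
  unfold qnum
  apply div_pos
  · have : q ^ (n + 1) < 1 := pow_lt_one₀ hq0.le hq1 (Nat.succ_ne_zero n)
    linarith
  · linarith

lemma qfact_pos (q : ℝ) (hq0 : 0 < q) (hq1 : q < 1) (n : ℕ) : 0 < qfact q n := by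
  induction n with
  | zero => norm_num [qfact]
  | succ n ih => exact mul_pos ih (qnum_pos q hq0 hq1 n)

lemma qnum_tendsto (q : ℝ) (hq0 : 0 < q) (hq1 : q < 1) :
    Filter.Tendsto (fun n => qnum q n) Filter.atTop (nhds (1 / (1 - q))) := by
  have h : Filter.Tendsto (fun n : ℕ => q ^ n) Filter.atTop (nhds 0) :=
    tendsto_pow_atTop_nhds_zero_of_lt_one hq0.le hq1
  have := ((tendsto_const_nhds (x := (1:ℝ))).sub h).div_const (1 - q)
  simpa [qnum] using this

lemma qsummable (q : ℝ) (hq0 : 0 < q) (hq1 : q < 1) (x : ℝ) (hx0 : 0 ≤ x)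
    (hx : x < 1 / (1 - q)) : Summable (fun n : ℕ => x ^ n / qfact q n) := by
  rcases eq_or_lt_of_le hx0 with h0 | h0
  · apply summable_of_ne_finset_zero (s := {0})
    intro n hn
    have : n ≠ 0 := by simpa using hn
    simp [← h0, zero_pow this]
  · apply summable_of_ratio_test_tendsto_lt_one (l := x * (1 - q))
    · have := (lt_div_iff₀ (by linarith : (0:ℝ) < 1 - q)).mp hx
      linarith
    · filter_upwards with n
      exact ne_of_gt (div_pos (pow_pos h0 n) (qfact_pos q hq0 hq1 n))
    · have h : Filter.Tendsto (fun n : ℕ => x / qnum q (n + 1)) Filter.atTop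
          (nhds (x / (1 / (1 - q)))) := by
        apply Filter.Tendsto.div tendsto_const_nhds
        · exact (qnum_tendsto q hq0 hq1).comp (Filter.tendsto_add_atTop_nat 1)
        · have h1q : (0:ℝ) < 1 - q := by linarith
          positivity
      have hx' : x / (1 / (1 - q)) = x * (1 - q) := by
        field_simp
      rw [hx'] at h
      apply h.congr
      intro n
      have hf := qfact_pos q hq0 hq1 n
      have hf1 := qfact_pos q hq0 hq1 (n + 1)
      have hq := qnum_pos q hq0 hq1 n
      rw [Real.norm_eq_abs, Real.norm_eq_abs, abs_of_pos (div_pos (pow_pos h0 _) hf1),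
        abs_of_pos (div_pos (pow_pos h0 _) hf)]
      rw [show qfact q (n+1) = qfact q n * qnum q (n+1) from rfl]
      field_simp
      ring

lemma qexR_pos (q : ℝ) (hq0 : 0 < q) (hq1 : q < 1) (x : ℝ) (hx0 : 0 ≤ x)
    (hx : x < 1 / (1 - q)) : 0 < qexR q x := by
  have hs := qsummable q hq0 hq1 x hx0 hx
  have h1 : (1 : ℝ) ≤ qexR q x := by
    have := Summable.le_tsum hs 0 (fun i _ => div_nonneg (pow_nonneg hx0 i) (qfact_pos q hq0 hq1 i).le)
    simpa [qfact, qexR] using this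
  linarith

lemma qexC_ofReal (q : ℝ) (x : ℝ) : qexC q (x : ℂ) = (qexR q x : ℂ) := by
  unfold qexC qexR
  rw [Complex.ofReal_tsum]
  push_cast
  rfl

/-- for `|z|² < R` and `|z'|² < R`, one has `|conj(z') z| < R` (so the
right-hand side is defined) and the ℓ² inner product of the q-coherent states is
`⟨c_{z'}, c_z⟩ = (e_q(|z'|²) e_q(|z|²))^{-1/2} e_q(conj(z') z)`;
in particular `⟨c_z, c_z⟩ = 1`. -/
theorem coherent_state_overlap (q : ℝ) (hq0 : 0 < q) (hq1 : q < 1) (z z' : ℂ)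
    (hz : ‖z‖ ^ 2 < 1 / (1 - q)) (hz' : ‖z'‖ ^ 2 < 1 / (1 - q)) :
    ‖(starRingEnd ℂ) z' * z‖ < 1 / (1 - q) ∧
    (∑' n : ℕ, (starRingEnd ℂ) (coh q z' n) * coh q z n) =
      (((Real.sqrt (qexR q (‖z'‖ ^ 2) * qexR q (‖z‖ ^ 2)))⁻¹ : ℝ) : ℂ) *
        qexC q ((starRingEnd ℂ) z' * z) ∧
    (∑' n : ℕ, (starRingEnd ℂ) (coh q z n) * coh q z n) = 1 := by
  have hqf := qfact_pos q hq0 hq1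
  have key : ∀ w w' : ℂ, ∀ n : ℕ,
      (starRingEnd ℂ) (coh q w' n) * coh q w n =
      ((((Real.sqrt (qexR q (‖w'‖ ^ 2)))⁻¹ * (Real.sqrt (qexR q (‖w‖ ^ 2)))⁻¹ : ℝ)) : ℂ) *
        (((starRingEnd ℂ) w' * w) ^ n / (qfact q n : ℂ)) := by
    intro w w' n
    unfold coh
    have hfn : ((Real.sqrt (qfact q n) : ℝ) : ℂ) * ((Real.sqrt (qfact q n) : ℝ) : ℂ)
        = ((qfact q n : ℝ) : ℂ) := by
      rw [← Complex.ofReal_mul, Real.mul_self_sqrt (hqf n).le]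
    have hne : ((Real.sqrt (qfact q n) : ℝ) : ℂ) ≠ 0 := by
      simp only [ne_eq, Complex.ofReal_eq_zero]
      exact (Real.sqrt_pos.mpr (hqf n)).ne'
    have hfne : ((qfact q n : ℝ) : ℂ) ≠ 0 := by
      exact_mod_cast (hqf n).ne'
    simp only [map_div₀, map_mul, map_pow, Complex.conj_ofReal]
    push_cast
    field_simp
    rw [mul_pow, ← hfn]
    ring
  have hmul : ∀ w w' : ℂ, ‖w‖ ^ 2 < 1 / (1 - q) → ‖w'‖ ^ 2 < 1 / (1 - q) →
      (∑' n : ℕ, (starRingEnd ℂ) (coh q w' n) * coh q w n) =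
      (((Real.sqrt (qexR q (‖w'‖ ^ 2) * qexR q (‖w‖ ^ 2)))⁻¹ : ℝ) : ℂ) *
        qexC q ((starRingEnd ℂ) w' * w) := by
    intro w w' hw hw'
    calc (∑' n : ℕ, (starRingEnd ℂ) (coh q w' n) * coh q w n)
        = ∑' n : ℕ,
          ((((Real.sqrt (qexR q (‖w'‖ ^ 2)))⁻¹ * (Real.sqrt (qexR q (‖w‖ ^ 2)))⁻¹ : ℝ)) : ℂ) *
          (((starRingEnd ℂ) w' * w) ^ n / (qfact q n : ℂ)) := by
          exact tsum_congr (key w w')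
      _ = ((((Real.sqrt (qexR q (‖w'‖ ^ 2)))⁻¹ * (Real.sqrt (qexR q (‖w‖ ^ 2)))⁻¹ : ℝ)) : ℂ) *
          qexC q ((starRingEnd ℂ) w' * w) := tsum_mul_left
      _ = _ := by
          rw [Real.sqrt_mul (qexR_pos q hq0 hq1 _ (by positivity) hw').le, mul_inv]
  refine ⟨?_, hmul z z' hz hz', ?_⟩
  · have h1 : ‖(starRingEnd ℂ) z' * z‖ = ‖z'‖ * ‖z‖ := by
      rw [norm_mul, RCLike.norm_conj]
    rw [h1]
    nlinarith [sq_nonneg (‖z‖ - ‖z'‖), norm_nonneg z, norm_nonneg z']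
  · rw [hmul z z hz hz]
    have hpos := qexR_pos q hq0 hq1 (‖z‖ ^ 2) (by positivity) hz
    rw [Real.sqrt_mul_self hpos.le]
    have hc : (starRingEnd ℂ) z * z = ((‖z‖ ^ 2 : ℝ) : ℂ) := by
      rw [mul_comm, Complex.mul_conj, Complex.normSq_eq_norm_sq]
    rw [hc, qexC_ofReal]
    rw [← Complex.ofReal_mul, inv_mul_cancel₀ hpos.ne', Complex.ofReal_one]
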